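/- The semigroup 𝐈ℕ∞ is simple: it contains no proper two-sided ideals; equivalently, for any elements α and β of 𝐈ℕ∞ there exist γ, δ ∈ 𝐈ℕ∞ such that γαδ = β. -/

import Mathlib

/-- Partial transformations of the set ℕ of positive integers. -/
abbrev PMapN : Type := ℕ+ → Option ℕ+

/-- The domain of a partial transformation. -/
def pdom (f : PMapN) : Set ℕ+ := {n | f n ≠ none}

/-- The range of a partial transformation. -/
def pran (f : PMapN) : Set ℕ+ := {m | ∃ n, f n = some m}

/-- Composition of partial transformations: `pmul f g` applies `g` first and then `f`. -/
def pmul (f g : PMapN) : PMapN := fun n => (g n).bind f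

/-- The identity transformation 𝕀 of ℕ. -/
def pid : PMapN := fun n => some n

/-- `f` is a partial bijection (an injective partial map). -/
def IsPartialBij (f : PMapN) : Prop :=
  ∀ ⦃m n a⦄, f m = some a → f n = some a → m = n

/-- `f` is a partial isometry with respect to the metric `d(m, n) = |m - n|`. -/
def IsIsometry (f : PMapN) : Prop :=
  ∀ ⦃m n a b⦄, f m = some a → f n = some b →
    |((a : ℕ) : ℤ) - ((b : ℕ) : ℤ)| = |((m : ℕ) : ℤ) - ((n : ℕ) : ℤ)|

/-- Membership in the inverse monoid `𝐈ℕ∞` of partial cofinite isometries of ℕ: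
a partial bijection of ℕ with cofinite domain and cofinite range preserving distances. -/
def InIN (f : PMapN) : Prop :=
  IsPartialBij f ∧ (pdom f)ᶜ.Finite ∧ (pran f)ᶜ.Finite ∧ IsIsometry f

def pAdd (n : ℕ+) (k : ℕ) : ℕ+ := ⟨(n : ℕ) + k, Nat.lt_of_lt_of_le n.pos (Nat.le_add_right _ _)⟩

@[simp] lemma pAdd_coe (n : ℕ+) (k : ℕ) : ((pAdd n k : ℕ+) : ℕ) = (n : ℕ) + k := rfl

lemma finite_le (M : ℕ) : {m : ℕ+ | (m : ℕ) ≤ M}.Finite := by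
  have : {m : ℕ+ | (m : ℕ) ≤ M} = ((↑) : ℕ+ → ℕ) ⁻¹' Set.Iic M := rfl
  rw [this]
  exact Set.Finite.preimage (Set.injOn_of_injective PNat.coe_injective) (Set.finite_Iic M)

lemma exists_shift {α : PMapN} (hα : InIN α) :
    ∃ N M : ℕ+, ∀ k : ℕ, α (pAdd N k) = some (pAdd M k) := by
  obtain ⟨hbij, hdom, hran, hiso⟩ := hα
  obtain ⟨B, hB⟩ := hdom.bddAbove
  set N : ℕ+ := B + 1 with hN
  have hdomN : ∀ k : ℕ, ∃ m, α (pAdd N k) = some m := by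
    intro k
    have hmem : pAdd N k ∈ pdom α := by
      by_contra h
      have h2 : pAdd N k ≤ B := hB h
      have h3 : ((pAdd N k : ℕ+) : ℕ) ≤ (B : ℕ) := h2
      have h4 : (N : ℕ) = (B : ℕ) + 1 := by simp [hN]
      rw [pAdd_coe] at h3
      omega
    simp only [pdom, Set.mem_setOf_eq] at hmem
    cases hx : α (pAdd N k) with
    | none => exact absurd hx hmem
    | some m => exact ⟨m, rfl⟩
  choose v hv using hdomN
  have hiso' : ∀ j k : ℕ, |((v j : ℕ) : ℤ) - ((v k : ℕ) : ℤ)| = |(j : ℤ) - (k : ℤ)| := by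
    intro j k
    have h := hiso (hv j) (hv k)
    have h2 : ((pAdd N j : ℕ+) : ℕ) = (N : ℕ) + j := rfl
    have h3 : ((pAdd N k : ℕ+) : ℕ) = (N : ℕ) + k := rfl
    rw [h2, h3] at h
    rw [h]
    congr 1
    push_cast
    ring
  have h10 : |((v 1 : ℕ) : ℤ) - ((v 0 : ℕ) : ℤ)| = 1 := by
    have := hiso' 1 0; simpa using this
  set d : ℤ := ((v 1 : ℕ) : ℤ) - ((v 0 : ℕ) : ℤ) with hdd
  have hd : d = 1 ∨ d = -1 := (abs_eq (by norm_num)).mp h10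
  have hlin : ∀ k : ℕ, ((v k : ℕ) : ℤ) = ((v 0 : ℕ) : ℤ) + k * d := by
    intro k
    induction k using Nat.twoStepInduction with
    | zero => simp
    | one => simp [hdd]
    | more k ih1 ih2 =>
      have e1 : |((v (k+2) : ℕ) : ℤ) - ((v (k+1) : ℕ) : ℤ)| = 1 := by
        have := hiso' (k+2) (k+1); rw [this]; push_cast; simp
      have e2 : |((v (k+2) : ℕ) : ℤ) - ((v k : ℕ) : ℤ)| = 2 := by
        have := hiso' (k+2) k; rw [this]; push_cast; rw [abs_of_nonneg] <;> omega
      have e1' := (abs_eq (by norm_num : (0:ℤ) ≤ 1)).mp e1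
      have e2' := (abs_eq (by norm_num : (0:ℤ) ≤ 2)).mp e2
      rcases hd with h | h <;> rw [h] at ih1 ih2 ⊢ <;>
        rcases e1' with h1 | h1 <;> rcases e2' with h2 | h2 <;>
        push_cast at ih1 ih2 ⊢ <;> omega
  have hd1 : d = 1 := by
    rcases hd with h | h
    · exact h
    · exfalso
      have hk := hlin (v 0 : ℕ)
      have pos := (v ((v 0 : ℕ) : ℕ)).2
      rw [h] at hk
      have : (0:ℤ) < ((v ((v 0:ℕ)) : ℕ) : ℤ) := by exact_mod_cast pos
      omega
  refine ⟨N, v 0, ?_⟩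
  intro k
  have hk := hlin k
  rw [hd1, mul_one] at hk
  rw [hv k]
  congr 1
  apply PNat.coe_injective
  have : ((v k : ℕ) : ℤ) = ((v 0 : ℕ) : ℤ) + k := hk
  simp only [pAdd_coe]
  omega

lemma simple_pair (α β : PMapN) (hα : InIN α) (hβ : InIN β) :
    ∃ γ δ, InIN γ ∧ InIN δ ∧ pmul (pmul γ α) δ = β := by
  obtain ⟨N, M, hNM⟩ := exists_shift hα
  obtain ⟨hbβ, hdβ, hrβ, hiβ⟩ := hβ
  set δ : PMapN := fun n => some (pAdd N (n : ℕ)) with hδdef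
  set γ : PMapN := fun m => if h : (M : ℕ) < (m : ℕ) then β ⟨(m : ℕ) - (M : ℕ), by omega⟩ else none with hγdef
  have hγsome : ∀ ⦃m a⦄, γ m = some a → ∃ p : ℕ+, (p : ℕ) + (M : ℕ) = (m : ℕ) ∧ β p = some a := by
    intro m a h
    simp only [hγdef] at h
    split at h
    case isTrue h' => exact ⟨⟨(m : ℕ) - (M : ℕ), by omega⟩, by show ((m:ℕ) - (M:ℕ)) + (M:ℕ) = (m:ℕ); omega, h⟩
    case isFalse => exact absurd h (by simp)
  have hγβ : ∀ n : ℕ+, γ (pAdd M (n : ℕ)) = β n := by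
    intro n
    have h1 : (M : ℕ) < ((pAdd M (n : ℕ) : ℕ+) : ℕ) := by
      rw [pAdd_coe]; have := n.pos; omega
    simp only [hγdef, pAdd_coe, dif_pos h1]
    congr 1
    apply PNat.coe_injective
    show (M : ℕ) + (n : ℕ) - (M : ℕ) = (n : ℕ)
    omega
  refine ⟨γ, δ, ⟨?_, ?_, ?_, ?_⟩, ⟨?_, ?_, ?_, ?_⟩, ?_⟩
  · -- γ partial bij
    intro m n a h1 h2
    obtain ⟨p, hp, hp2⟩ := hγsome h1
    obtain ⟨q, hq, hq2⟩ := hγsome h2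
    have h3 := hbβ hp2 hq2
    have h4 := congrArg (fun x : ℕ+ => (x : ℕ)) h3
    apply PNat.coe_injective
    omega
  · -- γ pdom cofinite
    apply Set.Finite.subset ((finite_le (M : ℕ)).union (Set.Finite.image (fun b : ℕ+ => pAdd M (b : ℕ)) hdβ))
    intro m hm
    simp only [pdom, Set.mem_compl_iff, Set.mem_setOf_eq, not_not] at hm
    by_cases h : (M : ℕ) < (m : ℕ)
    · right
      refine ⟨⟨(m : ℕ) - (M : ℕ), by omega⟩, ?_, ?_⟩
      · simp only [pdom, Set.mem_compl_iff, Set.mem_setOf_eq, not_not]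
        simp only [hγdef, dif_pos h] at hm
        exact fun h' => h' hm
      · apply PNat.coe_injective
        show (M : ℕ) + ((m : ℕ) - (M : ℕ)) = (m : ℕ)
        omega
    · left; simp only [Set.mem_setOf_eq]; omega
  · -- γ pran cofinite
    apply Set.Finite.subset hrβ
    intro a ha
    simp only [pran, Set.mem_compl_iff, Set.mem_setOf_eq] at ha ⊢
    intro ⟨n, hn⟩
    exact ha ⟨pAdd M (n : ℕ), by rw [hγβ n]; exact hn⟩
  · -- γ isometry
    intro m n a b h1 h2
    obtain ⟨p, hp, hp2⟩ := hγsome h1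
    obtain ⟨q, hq, hq2⟩ := hγsome h2
    have h3 := hiβ hp2 hq2
    rw [h3]
    congr 1
    omega
  · -- δ partial bij
    intro m n a h1 h2
    simp only [hδdef, Option.some.injEq] at h1 h2
    apply PNat.coe_injective
    have := congrArg (fun x : ℕ+ => (x : ℕ)) (h1.trans h2.symm)
    simpa using this
  · -- δ pdom cofinite
    have : (pdom δ)ᶜ = ∅ := by
      ext n; simp [pdom, hδdef]
    rw [this]; exact Set.finite_empty
  · -- δ pran cofinite
    apply Set.Finite.subset (finite_le (N : ℕ))
    intro m hm
    simp only [pran, Set.mem_compl_iff, Set.mem_setOf_eq] at hm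
    simp only [Set.mem_setOf_eq]
    by_contra h
    push_neg at h
    exact hm ⟨⟨(m : ℕ) - (N : ℕ), by omega⟩, by
      simp only [hδdef, Option.some.injEq]
      apply PNat.coe_injective
      show (N : ℕ) + ((m : ℕ) - (N : ℕ)) = (m : ℕ)
      omega⟩
  · -- δ isometry
    intro m n a b h1 h2
    simp only [hδdef, Option.some.injEq] at h1 h2
    rw [← h1, ← h2]
    simp only [pAdd_coe]
    congr 1
    push_cast
    ring
  · -- the equation
    funext n
    show ((δ n).bind fun x => (α x).bind γ) = β n
    have hδn : δ n = some (pAdd N (n : ℕ)) := rfl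
    rw [hδn, Option.bind_some, hNM (n : ℕ), Option.bind_some]
    exact hγβ n

/-- The semigroup `𝐈ℕ∞` is simple: it has no proper two-sided ideals;
equivalently, for any `α, β ∈ 𝐈ℕ∞` there exist `γ, δ ∈ 𝐈ℕ∞` with `γαδ = β`. -/
theorem stmt9 :
    (∀ I : Set PMapN, (∀ f ∈ I, InIN f) → I.Nonempty →
        (∀ f ∈ I, ∀ g, InIN g → pmul f g ∈ I ∧ pmul g f ∈ I) →
        ∀ f, InIN f → f ∈ I) ∧
    (∀ α β, InIN α → InIN β →
        ∃ γ δ, InIN γ ∧ InIN δ ∧ pmul (pmul γ α) δ = β) := by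
  constructor
  · intro I hmem ⟨f₀, hf₀⟩ hcl f hf
    obtain ⟨γ, δ, hγ, hδ, heq⟩ := simple_pair f₀ f (hmem f₀ hf₀) hf
    have h1 : pmul γ f₀ ∈ I := (hcl f₀ hf₀ γ hγ).2
    have h2 : pmul (pmul γ f₀) δ ∈ I := (hcl _ h1 δ hδ).1
    rwa [heq] at h2
  · exact simple_pair
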